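/- A positive sentence holds in a structure M if and only if it holds in some (equivalently, every) prime power of M. -/

import Mathlib

namespace PosLogic

open FirstOrder FirstOrder.Language FirstOrder.Language.Structure Set

universe u v w x y z

variable {L : FirstOrder.Language.{u, v}}

/-- Positive formulas: built from atomic formulas and `⊥` using `∧`, `∨` and `∃`. -/
inductive PosFormula (L : FirstOrder.Language.{u, v}) (α : Type y) : ℕ → Type (max u v y)
  | falsum {n : ℕ} : PosFormula L α n
  | equal {n : ℕ} (t₁ t₂ : L.Term (α ⊕ Fin n)) : PosFormula L α n
  | rel {n l : ℕ} (R : L.Relations l) (ts : Fin l → L.Term (α ⊕ Fin n)) : PosFormula L α n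
  | and {n : ℕ} (φ ψ : PosFormula L α n) : PosFormula L α n
  | or {n : ℕ} (φ ψ : PosFormula L α n) : PosFormula L α n
  | ex {n : ℕ} (φ : PosFormula L α (n + 1)) : PosFormula L α n

variable {α : Type y}

/-- Realization (satisfaction) of a positive formula. -/
def PosFormula.Realize {M : Type w} [L.Structure M] :
    ∀ {n : ℕ}, PosFormula L α n → (α → M) → (Fin n → M) → Prop
  | _, .falsum, _, _ => False
  | _, .equal t₁ t₂, v, xs => t₁.realize (Sum.elim v xs) = t₂.realize (Sum.elim v xs)
  | _, .rel R ts, v, xs => RelMap R fun i => (ts i).realize (Sum.elim v xs)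
  | _, .and φ ψ, v, xs => φ.Realize v xs ∧ ψ.Realize v xs
  | _, .or φ ψ, v, xs => φ.Realize v xs ∨ ψ.Realize v xs
  | _, .ex φ, v, xs => ∃ a, φ.Realize v (Fin.snoc xs a)

/-- Positive sentences. -/
abbrev PosSentence (L : FirstOrder.Language.{u, v}) : Type (max u v) := PosFormula L Empty 0

/-- A positive sentence holds in a structure. -/
def PosSentence.Realize (M : Type w) [L.Structure M] (φ : PosSentence L) : Prop :=
  PosFormula.Realize (M := M) φ Empty.elim (fun i => i.elim0)

/-- Two structures are positively equivalent when they satisfy the same positive sentences. -/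
def PosEquivalent (M : Type w) (N : Type x) [L.Structure M] [L.Structure N] : Prop :=
  ∀ φ : PosSentence L, PosSentence.Realize M φ ↔ PosSentence.Realize N φ

/-- A filter over a poset: a nonempty collection of upsets, upward closed among upsets and
closed under binary intersections. -/
structure PosetFilter (X : Type x) [Preorder X] where
  sets : Set (Set X)
  upper' : ∀ V ∈ sets, IsUpperSet V
  nonempty' : sets.Nonempty
  mono' : ∀ V ∈ sets, ∀ W : Set X, IsUpperSet W → V ⊆ W → W ∈ sets
  inter' : ∀ V ∈ sets, ∀ W ∈ sets, V ∩ W ∈ sets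

/-- A prime filter over a poset. -/
def PosetFilter.Prime {X : Type x} [Preorder X] (F : PosetFilter X) : Prop :=
  ∅ ∉ F.sets ∧ ∀ V W : Set X, IsUpperSet V → IsUpperSet W →
    V ∪ W ∈ F.sets → V ∈ F.sets ∨ W ∈ F.sets

/-- Predicate version: `S` is a filter over the poset `X`. -/
def IsPosetFilter {X : Type x} [Preorder X] (S : Set (Set X)) : Prop :=
  (∀ V ∈ S, IsUpperSet V) ∧ S.Nonempty ∧
    (∀ V ∈ S, ∀ W : Set X, IsUpperSet W → V ⊆ W → W ∈ S) ∧
    (∀ V ∈ S, ∀ W ∈ S, V ∩ W ∈ S)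

/-- Predicate version: `S` is a prime filter over the poset `X`. -/
def IsPrimePosetFilter {X : Type x} [Preorder X] (S : Set (Set X)) : Prop :=
  IsPosetFilter S ∧ ∅ ∉ S ∧ ∀ V W : Set X, IsUpperSet V → IsUpperSet W →
    V ∪ W ∈ S → V ∈ S ∨ W ∈ S

/-- A wellfounded forest: a poset whose principal downsets are well ordered. -/
def IsWellFoundedForest (X : Type x) [Preorder X] : Prop :=
  ∀ a : X, IsWellOrder (Set.Iic a) (· < ·)

/-- An ordered system of structures indexed by a poset. -/
structure OrderedSystem (L : FirstOrder.Language.{u, v}) (X : Type x) [Preorder X]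
    (M : X → Type w) [∀ a, L.Structure (M a)] where
  hom : ∀ ⦃a b : X⦄, a ≤ b → M a →[L] M b
  hom_id : ∀ (a : X) (m : M a), hom (le_refl a) m = m
  hom_comp : ∀ ⦃a b c : X⦄ (hab : a ≤ b) (hbc : b ≤ c) (m : M a),
    hom hbc (hom hab m) = hom (hab.trans hbc) m

variable {X : Type x} [PartialOrder X] {M : X → Type w} [∀ a, L.Structure (M a)]

/-- A compatible family in `S_F`: an element of `S_V` for some `V ∈ F`. -/
structure CompFam (D : OrderedSystem L X M) (F : PosetFilter X) where
  dom : Set X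
  dom_mem : dom ∈ F.sets
  val : ∀ a ∈ dom, M a
  compat : ∀ ⦃b c : X⦄ (hb : b ∈ dom) (hc : c ∈ dom) (hbc : b ≤ c),
    D.hom hbc (val b hb) = val c hc

variable {D : OrderedSystem L X M} {F : PosetFilter X}

/-- The set `⟦a = b⟧`. -/
def eqSet (a b : CompFam D F) : Set X :=
  {p | ∃ (ha : p ∈ a.dom) (hb : p ∈ b.dom), a.val p ha = b.val p hb}

theorem eqSet_upper (a b : CompFam D F) : IsUpperSet (eqSet a b) := by
  rintro p q hpq ⟨ha, hb, he⟩
  have hap := F.upper' _ a.dom_mem hpq ha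
  have hbp := F.upper' _ b.dom_mem hpq hb
  exact ⟨hap, hbp, by rw [← a.compat ha hap hpq, ← b.compat hb hbp hpq, he]⟩

/-- The relation `≡_F`. -/
instance CompFam.setoid (D : OrderedSystem L X M) (F : PosetFilter X) :
    Setoid (CompFam D F) where
  r a b := eqSet a b ∈ F.sets
  iseqv := by
    constructor
    · intro a
      exact F.mono' _ a.dom_mem _ (eqSet_upper a a) (fun p hp => ⟨hp, hp, rfl⟩)
    · intro a b h
      refine F.mono' _ h _ (eqSet_upper b a) ?_
      rintro p ⟨ha, hb, he⟩
      exact ⟨hb, ha, he.symm⟩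
    · intro a b c hab hbc
      refine F.mono' _ (F.inter' _ hab _ hbc) _ (eqSet_upper a c) ?_
      rintro p ⟨⟨ha, hb, h1⟩, hb', hc, h2⟩
      exact ⟨ha, hc, h1.trans h2⟩

theorem PosetFilter.univ_mem (F : PosetFilter X) : Set.univ ∈ F.sets := by
  obtain ⟨V, hV⟩ := F.nonempty'
  exact F.mono' _ hV _ isUpperSet_univ (Set.subset_univ V)

theorem PosetFilter.iInter_mem (F : PosetFilter X) :
    ∀ {n : ℕ} (s : Fin n → Set X), (∀ i, s i ∈ F.sets) → (⋂ i, s i) ∈ F.sets := by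
  intro n
  induction n with
  | zero =>
    intro s _
    rw [Set.iInter_of_empty]
    exact F.univ_mem
  | succ k ih =>
    intro s hs
    have he : (⋂ i, s i) = s 0 ∩ ⋂ i : Fin k, s i.succ := by
      ext p
      simp only [Set.mem_iInter, Set.mem_inter_iff, Fin.forall_fin_succ]
    rw [he]
    exact F.inter' _ (hs 0) _ (ih _ fun i => hs i.succ)

/-- Pointwise application of a function symbol to compatible families. -/
def CompFam.app {n : ℕ} (g : L.Functions n) (a : Fin n → CompFam D F) : CompFam D F where
  dom := ⋂ i, (a i).dom
  dom_mem := F.iInter_mem _ fun i => (a i).dom_mem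
  val p hp := funMap g fun i => (a i).val p (Set.mem_iInter.1 hp i)
  compat := by
    intro b c hb hc hbc
    rw [Hom.map_fun]
    congr 1
    funext i
    exact (a i).compat _ _ hbc

/-- The set `⟦R(a₁, …, aₙ)⟧`. -/
def relSet {n : ℕ} (R : L.Relations n) (a : Fin n → CompFam D F) : Set X :=
  {p | ∃ h : ∀ i, p ∈ (a i).dom, RelMap R fun i => (a i).val p (h i)}

/-- The set `⟦φ(a₁, …, aₙ)⟧` for a positive formula `φ`. -/
def posSet {n : ℕ} (φ : PosFormula L Empty n) (a : Fin n → CompFam D F) : Set X :=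
  {p | ∃ h : ∀ i, p ∈ (a i).dom,
    PosFormula.Realize φ Empty.elim fun i => (a i).val p (h i)}

/-- The filter product of an ordered system with respect to a filter over the index poset. -/
def FilterProd (D : OrderedSystem L X M) (F : PosetFilter X) : Type (max x w) :=
  Quotient (CompFam.setoid D F)

noncomputable instance FilterProd.structure : L.Structure (FilterProd D F) where
  funMap {n} g v :=
    Quotient.mk (CompFam.setoid D F) (CompFam.app g fun i => (v i).out)
  RelMap {n} R v :=
    ∃ a : Fin n → CompFam D F,
      (∀ i, Quotient.mk (CompFam.setoid D F) (a i) = v i) ∧ relSet R a ∈ F.sets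

/-- `(N, g)` is a direct limit (colimit) cocone of the ordered system `D`. -/
structure IsDirectLimitCocone {X : Type x} [Preorder X] {M : X → Type w}
    [∀ a, L.Structure (M a)] (D : OrderedSystem L X M)
    (N : Type z) [L.Structure N] (g : ∀ a, M a →[L] N) : Prop where
  compat : ∀ ⦃a b : X⦄ (hab : a ≤ b) (m : M a), g b (D.hom hab m) = g a m
  universal : ∀ (P : Type (max x w z)) [L.Structure P] (h : ∀ a, M a →[L] P),
    (∀ ⦃a b : X⦄ (hab : a ≤ b) (m : M a), h b (D.hom hab m) = h a m) →
    ∃! k : N →[L] P, ∀ (a : X) (m : M a), k (g a m) = h a m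

/-- A chain of structures: an ordered system indexed by a nonempty well ordered poset. -/
structure ChainSystem (L : FirstOrder.Language.{u, v}) where
  X : Type w
  [lo : LinearOrder X]
  [ne : Nonempty X]
  wf : WellFoundedLT X
  Mi : X → Type w
  [str : ∀ a, L.Structure (Mi a)]
  sys : OrderedSystem L X Mi

attribute [instance] ChainSystem.lo ChainSystem.ne ChainSystem.str

/-- An ordered system indexed by a wellfounded forest, together with a prime filter. -/
structure PrimeSystem (L : FirstOrder.Language.{u, v}) where
  X : Type w
  [po : PartialOrder X]
  forest : IsWellFoundedForest X
  Mi : X → Type w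
  [str : ∀ a, L.Structure (Mi a)]
  sys : OrderedSystem L X Mi
  F : PosetFilter X
  prime : F.Prime

attribute [instance] PrimeSystem.po PrimeSystem.str

/-- The ultrapower `M^ι/u`. -/
def Ultrapower (M : Type w) (ι : Type z) (u : Ultrafilter ι) :
    Type (max w z) :=
  (↑u : Filter ι).Product fun _ => M

noncomputable instance Ultrapower.structure (M : Type w) [L.Structure M] (ι : Type z)
    (u : Ultrafilter ι) : L.Structure (Ultrapower M ι u) :=
  inferInstanceAs (L.Structure ((↑u : Filter ι).Product fun _ => M))

/-- A prime power of the structure `N`: a prime product of an ordered system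
all of whose structures are `N`. -/
structure PrimePowerOf (L : FirstOrder.Language.{u, v}) (N : Type w) [L.Structure N] where
  X : Type x
  [po : PartialOrder X]
  forest : IsWellFoundedForest X
  sys : OrderedSystem L X fun _ => N
  F : PosetFilter X
  prime : F.Prime

attribute [instance] PrimePowerOf.po

/-- The carrier of a prime power. -/
def PrimePowerOf.carrier {N : Type w} [L.Structure N] (p : PrimePowerOf L N) :
    Type (max x w) :=
  FilterProd p.sys p.F

noncomputable instance {N : Type w} [L.Structure N] (p : PrimePowerOf L N) :
    L.Structure p.carrier :=
  inferInstanceAs (L.Structure (FilterProd p.sys p.F))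

/-- Basic h-inductive sentences: universal closures of implications between
positive formulas. -/
structure BasicHInd (L : FirstOrder.Language.{u, v}) : Type (max u v) where
  n : ℕ
  lhs : PosFormula L Empty n
  rhs : PosFormula L Empty n

/-- Satisfaction of a basic h-inductive sentence. -/
def BasicHInd.Realize (φ : BasicHInd L) (M : Type w) [L.Structure M] : Prop :=
  ∀ xs : Fin φ.n → M, φ.lhs.Realize Empty.elim xs → φ.rhs.Realize Empty.elim xs

/-- Satisfaction of an h-inductive theory (a set of h-inductive sentences). -/
def ModelsHInd (M : Type w) [L.Structure M] (T : Set (BasicHInd L)) : Prop :=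
  ∀ φ ∈ T, φ.Realize M

/-- An immersion: a map preserving and reflecting all positive formulas. -/
def IsImmersion {M : Type w} {N : Type x} [L.Structure M] [L.Structure N]
    (f : N → M) : Prop :=
  ∀ {n : ℕ} (φ : PosFormula L Empty n) (xs : Fin n → N),
    PosFormula.Realize φ Empty.elim xs ↔ PosFormula.Realize φ Empty.elim (f ∘ xs)

/-- A positively existentially closed model of an h-inductive theory `T`. -/
def IsPec (T : Set (BasicHInd L)) (M : Type w) [L.Structure M] : Prop :=
  ModelsHInd M T ∧ ∀ (P : Type w) [L.Structure P], ModelsHInd P T →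
    ∀ f : M →[L] P, IsImmersion (L := L) (⇑f : M → P)

/-- Positive `κ`-saturation. -/
def PositivelySaturatedAt (M : Type w) [L.Structure M] (κ : Cardinal.{w}) : Prop :=
  ∀ (γ : Type w) (vp : γ → M), Cardinal.mk γ < κ →
    ∀ (n : ℕ) (p : Set (PosFormula L γ n)),
      (∀ s : Finset (PosFormula L γ n), ↑s ⊆ p →
        ∃ xs : Fin n → M, ∀ φ ∈ s, PosFormula.Realize φ vp xs) →
      ∃ xs : Fin n → M, ∀ φ ∈ p, PosFormula.Realize φ vp xs

/-- Positive saturation: positive `|M|`-saturation. -/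
def PositivelySaturated (M : Type w) [L.Structure M] : Prop :=
  PositivelySaturatedAt (L := L) M (Cardinal.mk M)



section Aux

theorem realize_zero_congr {B : Type*} [L.Structure B] (ψ : PosFormula L Empty 0)
    (f g : Fin 0 → B) (h : ψ.Realize Empty.elim f) : ψ.Realize Empty.elim g :=
  (funext (fun i => i.elim0) : f = g) ▸ h

theorem sum_elim_empty_comp {M' N' : Type*} (f : M' → N') {n : ℕ} (xs : Fin n → M') :
    (Sum.elim Empty.elim (f ∘ xs) : Empty ⊕ Fin n → N') = f ∘ Sum.elim Empty.elim xs := by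
  funext z
  cases z with
  | inl e => exact e.elim
  | inr i => rfl

theorem realize_hom {M' N' : Type*} [L.Structure M'] [L.Structure N'] (f : M' →[L] N') :
    ∀ {n : ℕ} (ψ : PosFormula L Empty n) (xs : Fin n → M'),
      ψ.Realize Empty.elim xs → ψ.Realize Empty.elim (⇑f ∘ xs) := by
  intro n ψ
  induction ψ with
  | falsum => exact fun xs h => h.elim
  | equal t₁ t₂ =>
    intro xs h
    simp only [PosFormula.Realize] at h ⊢
    rw [sum_elim_empty_comp, HomClass.realize_term, HomClass.realize_term, h]
  | rel R ts =>
    intro xs h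
    simp only [PosFormula.Realize] at h ⊢
    rw [sum_elim_empty_comp]
    have hmr := f.map_rel R _ h
    have e : (fun i => Term.realize (⇑f ∘ Sum.elim Empty.elim xs) (ts i)) =
        ⇑f ∘ fun i => Term.realize (Sum.elim Empty.elim xs) (ts i) :=
      funext fun i => HomClass.realize_term f
    rw [e]
    exact hmr
  | and φ ψ ihφ ihψ =>
    intro xs h
    simp only [PosFormula.Realize] at h ⊢
    exact ⟨ihφ _ h.1, ihψ _ h.2⟩
  | or φ ψ ihφ ihψ =>
    intro xs h
    simp only [PosFormula.Realize] at h ⊢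
    rcases h with h | h
    · exact Or.inl (ihφ _ h)
    · exact Or.inr (ihψ _ h)
  | ex φ ih =>
    intro xs h
    simp only [PosFormula.Realize] at h ⊢
    obtain ⟨a, ha⟩ := h
    refine ⟨f a, ?_⟩
    rw [← Fin.comp_snoc]
    exact ih _ ha

theorem posSet_upper {n : ℕ} (ψ : PosFormula L Empty n) (a : Fin n → CompFam D F) :
    IsUpperSet (posSet ψ a) := by
  rintro p q hpq ⟨h, hr⟩
  refine ⟨fun i => F.upper' _ (a i).dom_mem hpq (h i), ?_⟩
  have e : (fun i => (a i).val q (F.upper' _ (a i).dom_mem hpq (h i))) =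
      ⇑(D.hom hpq) ∘ fun i => (a i).val p (h i) :=
    funext fun i => ((a i).compat _ _ hpq).symm
  rw [e]
  exact realize_hom _ ψ _ hr

theorem relSet_upper {n : ℕ} (R : L.Relations n) (a : Fin n → CompFam D F) :
    IsUpperSet (relSet R a) := by
  rintro p q hpq ⟨h, hr⟩
  refine ⟨fun i => F.upper' _ (a i).dom_mem hpq (h i), ?_⟩
  have e : (fun i => (a i).val q (F.upper' _ (a i).dom_mem hpq (h i))) =
      ⇑(D.hom hpq) ∘ fun i => (a i).val p (h i) :=
    funext fun i => ((a i).compat _ _ hpq).symm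
  rw [e]
  exact (D.hom hpq).map_rel R _ hr

theorem CompFam.val_eq : ∀ {a b : CompFam D F}, a = b →
    ∀ (p : X) (h : p ∈ a.dom) (h' : p ∈ b.dom), a.val p h = b.val p h'
  | _, _, rfl, _, _, _ => rfl

/-- The class of a compatible family in the filter product. -/
def fmk (x : CompFam D F) : FilterProd D F := ⟦x⟧

theorem fmk_out (x : CompFam D F) : eqSet (Quotient.out (fmk x)) x ∈ F.sets :=
  Quotient.exact (Quotient.out_eq (fmk x))

theorem fmk_eq {a b : CompFam D F} : fmk a = fmk b ↔ eqSet a b ∈ F.sets := by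
  unfold fmk
  exact Quotient.eq

/-- The compatible family of realizations of a term. -/
def termFam {n : ℕ} (t : L.Term (Empty ⊕ Fin n)) (a : Fin n → CompFam D F) :
    CompFam D F where
  dom := ⋂ i, (a i).dom
  dom_mem := F.iInter_mem _ fun i => (a i).dom_mem
  val p hp := t.realize (Sum.elim Empty.elim fun i => (a i).val p (Set.mem_iInter.1 hp i))
  compat := by
    intro b c hb hc hbc
    have e : (Sum.elim Empty.elim fun i => (a i).val c (Set.mem_iInter.1 hc i) :
        Empty ⊕ Fin n → M c) =
        ⇑(D.hom hbc) ∘ Sum.elim Empty.elim fun i => (a i).val b (Set.mem_iInter.1 hb i) := by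
      funext z
      cases z with
      | inl e => exact e.elim
      | inr i => exact ((a i).compat _ _ hbc).symm
    show D.hom hbc (t.realize (Sum.elim Empty.elim fun i => (a i).val b
      (Set.mem_iInter.1 hb i))) = t.realize (Sum.elim Empty.elim fun i => (a i).val c
      (Set.mem_iInter.1 hc i))
    rw [e, HomClass.realize_term]

theorem realize_term_mk {n : ℕ} (t : L.Term (Empty ⊕ Fin n)) (a : Fin n → CompFam D F) :
    (t.realize (Sum.elim Empty.elim fun i => fmk (a i)) : FilterProd D F) =
      fmk (termFam t a) := by
  induction t with
  | var z =>
    cases z with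
    | inl e => exact e.elim
    | inr i =>
      show fmk (a i) = _
      apply Quotient.sound
      refine F.mono' _ (F.iInter_mem _ fun j => (a j).dom_mem) _ (eqSet_upper _ _) ?_
      intro p hp
      exact ⟨Set.mem_iInter.1 hp i, hp, rfl⟩
  | func g ts ih =>
    have e : (fun i => Term.realize (Sum.elim Empty.elim fun j => fmk (a j))
        (ts i)) = fun i => fmk (termFam (ts i) a) := funext fun i => ih i
    show funMap g (fun i => Term.realize (Sum.elim Empty.elim fun j =>
      fmk (a j)) (ts i)) = _
    rw [e]
    show (⟦CompFam.app g fun i =>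
      Quotient.out (fmk (termFam (ts i) a))⟧ : FilterProd D F) = _
    apply Quotient.sound
    have hout : ∀ i, eqSet (Quotient.out (fmk (termFam (ts i) a)))
        (termFam (ts i) a) ∈ F.sets := fun i => fmk_out _
    refine F.mono' _ (F.inter' _ (F.iInter_mem _ hout) _
      (F.iInter_mem _ fun j => (a j).dom_mem)) _ (eqSet_upper _ _) ?_
    rintro p ⟨hp1, hp2⟩
    have hdom : ∀ i, p ∈ (Quotient.out (fmk (termFam (ts i) a))).dom :=
      fun i => (Set.mem_iInter.1 hp1 i).choose
    refine ⟨Set.mem_iInter.2 hdom, hp2, ?_⟩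
    show funMap g _ = Term.realize _ (Term.func g ts)
    simp only [Term.realize]
    congr 1
    funext i
    obtain ⟨h1, h2, heq⟩ := Set.mem_iInter.1 hp1 i
    exact heq

theorem snoc_dom_castSucc {n : ℕ} (a : Fin n → CompFam D F) (b : CompFam D F) (i : Fin n)
    {p : X} (h : p ∈ ((Fin.snoc a b : Fin _ → CompFam D F) i.castSucc).dom) : p ∈ (a i).dom := by
  rw [Fin.snoc_castSucc] at h
  exact h

theorem snoc_dom_last {n : ℕ} (a : Fin n → CompFam D F) (b : CompFam D F)
    {p : X} (h : p ∈ ((Fin.snoc a b : Fin _ → CompFam D F) (Fin.last n)).dom) : p ∈ b.dom := by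
  rw [Fin.snoc_last] at h
  exact h

theorem snoc_dom {n : ℕ} (a : Fin n → CompFam D F) (b : CompFam D F) {p : X}
    (ha : ∀ i, p ∈ (a i).dom) (hb : p ∈ b.dom) :
    ∀ i : Fin (n + 1), p ∈ ((Fin.snoc a b : Fin _ → CompFam D F) i).dom := by
  intro i
  refine Fin.lastCases ?_ (fun j => ?_) i
  · rw [Fin.snoc_last]; exact hb
  · rw [Fin.snoc_castSucc]; exact ha j

theorem snoc_val {n : ℕ} (a : Fin n → CompFam D F) (b : CompFam D F) {p : X}
    (h : ∀ i, p ∈ ((Fin.snoc a b : Fin _ → CompFam D F) i).dom)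
    (ha : ∀ i, p ∈ (a i).dom) (hb : p ∈ b.dom) :
    (fun i => ((Fin.snoc a b : Fin _ → CompFam D F) i).val p (h i)) =
      (Fin.snoc (fun i => (a i).val p (ha i)) (b.val p hb) : Fin _ → M p) := by
  funext i
  refine Fin.lastCases ?_ (fun j => ?_) i
  · have e1 : (Fin.snoc a b : Fin _ → CompFam D F) (Fin.last n) = b := by simp
    refine (CompFam.val_eq e1 p (h _) hb).trans ?_
    simp
  · have e2 : (Fin.snoc a b : Fin _ → CompFam D F) j.castSucc = a j := by simp
    refine (CompFam.val_eq e2 p (h _) (ha j)).trans ?_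
    simp

theorem mem_posSet_snoc {n : ℕ} (ψ : PosFormula L Empty (n + 1)) (a : Fin n → CompFam D F)
    (b : CompFam D F) {p : X} :
    p ∈ posSet ψ (Fin.snoc a b : Fin _ → CompFam D F) ↔
      ∃ (ha : ∀ i, p ∈ (a i).dom) (hb : p ∈ b.dom),
        ψ.Realize Empty.elim
          (Fin.snoc (fun i => (a i).val p (ha i)) (b.val p hb) : Fin _ → M p) := by
  constructor
  · rintro ⟨h, hr⟩
    have ha : ∀ i, p ∈ (a i).dom := fun i => snoc_dom_castSucc a b i (h i.castSucc)
    have hb : p ∈ b.dom := snoc_dom_last a b (h (Fin.last n))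
    refine ⟨ha, hb, ?_⟩
    rw [← snoc_val a b h ha hb]
    exact hr
  · rintro ⟨ha, hb, hr⟩
    refine ⟨snoc_dom a b ha hb, ?_⟩
    rw [snoc_val a b _ ha hb]
    exact hr

theorem exists_compFam_choice (forest : IsWellFoundedForest X)
    (V : Set X) (hVF : V ∈ F.sets) (P : ∀ p : X, M p → Prop)
    (hP : ∀ ⦃p q : X⦄ (hpq : p ≤ q) (m : M p), P p m → P q (D.hom hpq m))
    (hex : ∀ p ∈ V, ∃ m, P p m) :
    ∃ b : CompFam D F, b.dom = V ∧ ∀ (p : X) (hp : p ∈ b.dom), P p (b.val p hp) := by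
  classical
  choose w hw using hex
  have hwo : ∀ p : X, IsWellFounded (Set.Iic p) (· < ·) := fun p => (forest p).toIsWellFounded
  let S : ∀ p : X, Set (Set.Iic p) := fun p => {q | ↑q ∈ V}
  have hS : ∀ p, p ∈ V → (⟨p, le_refl p⟩ : Set.Iic p) ∈ S p := fun p hp => hp
  let μ : ∀ p : X, p ∈ V → Set.Iic p := fun p hp => (hwo p).wf.min (S p) ⟨_, hS p hp⟩
  have hμV : ∀ p hp, (↑(μ p hp) : X) ∈ V := fun p hp => (hwo p).wf.min_mem (S p) ⟨_, hS p hp⟩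
  have hμle : ∀ p hp, (↑(μ p hp) : X) ≤ p := fun p hp => (μ p hp).2
  have hμeq : ∀ p q (hp : p ∈ V) (hq : q ∈ V) (hpq : p ≤ q),
      (↑(μ p hp) : X) = ↑(μ q hq) := by
    intro p q hp hq hpq
    haveI := forest q
    haveI := forest p
    have h1 : (⟨↑(μ p hp), le_trans (hμle p hp) hpq⟩ : Set.Iic q) ∈ S q := hμV p hp
    rcases trichotomous_of (· < ·) (μ q hq)
      (⟨↑(μ p hp), le_trans (hμle p hp) hpq⟩ : Set.Iic q) with hlt | heq | hgt
    · exfalso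
      have hlt' : (↑(μ q hq) : X) < ↑(μ p hp) := hlt
      have hle : (↑(μ q hq) : X) ≤ p := le_trans hlt'.le (hμle p hp)
      have h3 : (⟨↑(μ q hq), hle⟩ : Set.Iic p) ∈ S p := hμV q hq
      exact (hwo p).wf.not_lt_min (S p) h3
        (show (⟨↑(μ q hq), hle⟩ : Set.Iic p) < μ p hp from hlt')
    · exact (congrArg Subtype.val heq).symm
    · exact absurd hgt ((hwo q).wf.not_lt_min (S q) h1)
  refine ⟨⟨V, hVF, fun p hp => D.hom (hμle p hp) (w _ (hμV p hp)), ?_⟩, rfl, ?_⟩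
  · intro p q hp hq hpq
    have e := hμeq p q hp hq hpq
    rw [D.hom_comp]
    have gen : ∀ (c₁ c₂ : X), c₁ = c₂ → ∀ (h₁ : c₁ ∈ V) (h₂ : c₂ ∈ V)
        (l₁ : c₁ ≤ q) (l₂ : c₂ ≤ q), D.hom l₁ (w c₁ h₁) = D.hom l₂ (w c₂ h₂) := by
      rintro c₁ c₂ rfl h₁ h₂ l₁ l₂
      rfl
    exact gen _ _ e _ _ _ _
  · intro p hp
    exact hP (hμle p hp) _ (hw _ (hμV p hp))

theorem los (forest : IsWellFoundedForest X) (hF : F.Prime) :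
    ∀ {n : ℕ} (ψ : PosFormula L Empty n) (a : Fin n → CompFam D F),
      ψ.Realize Empty.elim (fun i => fmk (a i)) ↔ posSet ψ a ∈ F.sets := by
  intro n ψ
  induction ψ with
  | falsum =>
    intro a
    simp only [PosFormula.Realize, false_iff]
    intro hmem
    have he : posSet (.falsum : PosFormula L Empty _) a = (∅ : Set X) := by
      ext p
      simp [posSet, PosFormula.Realize]
    exact hF.1 (he ▸ hmem)
  | equal t₁ t₂ =>
    intro a
    simp only [PosFormula.Realize]
    rw [realize_term_mk, realize_term_mk, fmk_eq]
    show eqSet (termFam t₁ a) (termFam t₂ a) ∈ F.sets ↔ _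
    have e : eqSet (termFam t₁ a) (termFam t₂ a) = posSet (.equal t₁ t₂) a := by
      ext p
      constructor
      · rintro ⟨h1, h2, he⟩
        exact ⟨fun i => Set.mem_iInter.1 h1 i, he⟩
      · rintro ⟨h, he⟩
        exact ⟨Set.mem_iInter.2 h, Set.mem_iInter.2 h, he⟩
    rw [e]
  | rel R ts =>
    intro a
    simp only [PosFormula.Realize]
    constructor
    · intro hRel
      have hRel' : ∃ b : Fin _ → CompFam D F,
          (∀ i, fmk (b i) = Term.realize
            (Sum.elim Empty.elim fun j => fmk (a j)) (ts i)) ∧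
          relSet R b ∈ F.sets := hRel
      obtain ⟨b, hb, hrel⟩ := hRel'
      have hbt : ∀ i, eqSet (b i) (termFam (ts i) a) ∈ F.sets :=
        fun i => Quotient.exact ((hb i).trans (realize_term_mk (ts i) a))
      refine F.mono' _ (F.inter' _ hrel _ (F.inter' _ (F.iInter_mem _ hbt) _
        (F.iInter_mem _ fun j => (a j).dom_mem))) _ (posSet_upper _ _) ?_
      rintro p ⟨⟨hbd, hR⟩, hpe, hpd⟩
      refine ⟨fun j => Set.mem_iInter.1 hpd j, ?_⟩
      show RelMap R fun i => Term.realize _ (ts i)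
      have e : (fun i => Term.realize (Sum.elim Empty.elim fun j =>
          (a j).val p (Set.mem_iInter.1 hpd j)) (ts i)) = fun i => (b i).val p (hbd i) := by
        funext i
        obtain ⟨h1, h2, he⟩ := Set.mem_iInter.1 hpe i
        exact he.symm
      rw [e]
      exact hR
    · intro hpos
      have key : ∃ b : Fin _ → CompFam D F,
          (∀ i, fmk (b i) = Term.realize
            (Sum.elim Empty.elim fun j => fmk (a j)) (ts i)) ∧
          relSet R b ∈ F.sets := by
        refine ⟨fun i => termFam (ts i) a, fun i => (realize_term_mk (ts i) a).symm, ?_⟩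
        refine F.mono' _ hpos _ (relSet_upper _ _) ?_
        rintro p ⟨h, hR⟩
        exact ⟨fun i => Set.mem_iInter.2 h, hR⟩
      exact key
  | and φ ψ ihφ ihψ =>
    intro a
    simp only [PosFormula.Realize, ihφ, ihψ]
    constructor
    · rintro ⟨h1, h2⟩
      refine F.mono' _ (F.inter' _ h1 _ h2) _ (posSet_upper _ _) ?_
      rintro p ⟨⟨ha1, hr1⟩, ha2, hr2⟩
      exact ⟨ha1, hr1, hr2⟩
    · intro h
      constructor
      · refine F.mono' _ h _ (posSet_upper _ _) ?_
        rintro p ⟨ha, hr1, hr2⟩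
        exact ⟨ha, hr1⟩
      · refine F.mono' _ h _ (posSet_upper _ _) ?_
        rintro p ⟨ha, hr1, hr2⟩
        exact ⟨ha, hr2⟩
  | or φ ψ ihφ ihψ =>
    intro a
    simp only [PosFormula.Realize, ihφ, ihψ]
    constructor
    · rintro (h | h)
      · refine F.mono' _ h _ (posSet_upper _ _) ?_
        rintro p ⟨ha, hr⟩
        exact ⟨ha, Or.inl hr⟩
      · refine F.mono' _ h _ (posSet_upper _ _) ?_
        rintro p ⟨ha, hr⟩
        exact ⟨ha, Or.inr hr⟩
    · intro h
      have hunion : posSet φ a ∪ posSet ψ a ∈ F.sets := by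
        refine F.mono' _ h _ ((posSet_upper φ a).union (posSet_upper ψ a)) ?_
        rintro p ⟨ha, hr | hr⟩
        · exact Or.inl ⟨ha, hr⟩
        · exact Or.inr ⟨ha, hr⟩
      exact hF.2 _ _ (posSet_upper _ _) (posSet_upper _ _) hunion
  | ex φ ih =>
    intro a
    simp only [PosFormula.Realize]
    constructor
    · rintro ⟨q, hq⟩
      obtain ⟨b, rfl⟩ := Quotient.exists_rep q
      have e : (fun i => fmk ((Fin.snoc a b : Fin _ → CompFam D F) i)) =
          Fin.snoc (fun i => fmk (a i)) (fmk b) := by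
        funext i
        refine Fin.lastCases ?_ (fun j => ?_) i
        · rw [Fin.snoc_last, Fin.snoc_last]
        · rw [Fin.snoc_castSucc, Fin.snoc_castSucc]
      have hmem : posSet φ (Fin.snoc a b) ∈ F.sets := (ih (Fin.snoc a b)).1 (by rw [e]; exact hq)
      refine F.mono' _ hmem _ (posSet_upper _ _) ?_
      intro p hp
      obtain ⟨ha, hb, hr⟩ := (mem_posSet_snoc φ a b).1 hp
      exact ⟨ha, b.val p hb, hr⟩
    · intro h
      have hex : ∀ p ∈ posSet (.ex φ) a, ∃ m : M p, ∃ ha : ∀ i, p ∈ (a i).dom,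
          φ.Realize Empty.elim (Fin.snoc (fun i => (a i).val p (ha i)) m) := by
        rintro p ⟨ha, w, hr⟩
        exact ⟨w, ha, hr⟩
      obtain ⟨b, hbdom, hb⟩ := exists_compFam_choice forest (posSet (.ex φ) a) h
        (fun p m => ∃ ha : ∀ i, p ∈ (a i).dom,
          φ.Realize Empty.elim (Fin.snoc (fun i => (a i).val p (ha i)) m))
        (by
          rintro p q hpq m ⟨ha, hr⟩
          refine ⟨fun i => F.upper' _ (a i).dom_mem hpq (ha i), ?_⟩
          have hh := realize_hom (D.hom hpq) φ _ hr
          rw [Fin.comp_snoc] at hh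
          have e2 : (⇑(D.hom hpq) ∘ fun i => (a i).val p (ha i)) =
              fun i => (a i).val q (F.upper' _ (a i).dom_mem hpq (ha i)) := by
            funext i
            exact (a i).compat _ _ hpq
          rw [e2] at hh
          exact hh)
        hex
      have hposm : posSet φ (Fin.snoc a b) ∈ F.sets := by
        refine F.mono' _ b.dom_mem _ (posSet_upper _ _) ?_
        intro p hp
        obtain ⟨ha, hr⟩ := hb p hp
        exact (mem_posSet_snoc φ a b).2 ⟨ha, hp, hr⟩
      have hreal := (ih (Fin.snoc a b)).2 hposm
      refine ⟨fmk b, ?_⟩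
      have e : (fun i => fmk ((Fin.snoc a b : Fin _ → CompFam D F) i)) =
          Fin.snoc (fun i => fmk (a i)) (fmk b) := by
        funext i
        refine Fin.lastCases ?_ (fun j => ?_) i
        · rw [Fin.snoc_last, Fin.snoc_last]
        · rw [Fin.snoc_castSucc, Fin.snoc_castSucc]
      rw [← e]
      exact hreal

theorem los_sentence {A : Type w} [L.Structure A] {D' : OrderedSystem L X fun _ => A}
    {F' : PosetFilter X} (forest : IsWellFoundedForest X) (hF : F'.Prime)
    (ψ : PosSentence L) :
    PosSentence.Realize (FilterProd D' F') ψ ↔ PosSentence.Realize A ψ := by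
  unfold PosSentence.Realize
  have e0 : (fun i : Fin 0 => (i.elim0 : FilterProd D' F')) =
      fun i => fmk (Fin.elim0 i) := funext fun i => i.elim0
  rw [e0, los (M := fun _ => A) (D := D') (F := F') forest hF ψ
    (Fin.elim0 : Fin 0 → CompFam D' F')]
  constructor
  · intro hmem
    have hne : (posSet ψ (Fin.elim0 : Fin 0 → CompFam D' F') : Set X).Nonempty := by
      rcases Set.eq_empty_or_nonempty (posSet ψ (Fin.elim0 : Fin 0 → CompFam D' F')) with he | hne
      · exact absurd (he ▸ hmem) hF.1
      · exact hne
    obtain ⟨p, h, hr⟩ := hne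
    exact realize_zero_congr ψ _ _ hr
  · intro hA
    refine F'.mono' _ F'.univ_mem _ (posSet_upper _ _) fun p _ => ?_
    exact ⟨fun i => i.elim0, realize_zero_congr ψ _ _ hA⟩

/-- The trivial prime power, over a one-point forest. -/
noncomputable def trivialPrimePower (A : Type w) [L.Structure A] : PrimePowerOf L A where
  X := PUnit
  forest := fun a => by
    haveI : WellFoundedLT (Set.Iic a) := Finite.to_wellFoundedLT
    infer_instance
  sys :=
    { hom := fun _ _ _ => Hom.id L A
      hom_id := fun _ _ => rfl
      hom_comp := fun _ _ _ _ _ _ => rfl }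
  F :=
    { sets := {V | PUnit.unit ∈ V}
      upper' := fun V hV p q _ _ => by cases q; exact hV
      nonempty' := ⟨Set.univ, trivial⟩
      mono' := fun V hV W _ hVW => hVW hV
      inter' := fun V hV W hW => ⟨hV, hW⟩ }
  prime := ⟨fun h => h, fun V W _ _ h => h⟩

end Aux

/-- A positive sentence holds in a structure `M` if and only if it holds in some
(equivalently, every) prime power of `M`. -/
theorem stmt10 (A : Type w) [L.Structure A] (φ : PosSentence L) :
    ((∃ p : PrimePowerOf L A, PosSentence.Realize (FilterProd p.sys p.F) φ) ↔
      PosSentence.Realize A φ) ∧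
    ((∀ p : PrimePowerOf L A, PosSentence.Realize (FilterProd p.sys p.F) φ) ↔
      PosSentence.Realize A φ) := by
  refine ⟨⟨fun ⟨p, hp⟩ => (los_sentence p.forest p.prime φ).1 hp,
    fun h => ⟨trivialPrimePower A, (los_sentence (trivialPrimePower A).forest
      (trivialPrimePower A).prime φ).2 h⟩⟩,
    ⟨fun h => (los_sentence (trivialPrimePower A).forest
      (trivialPrimePower A).prime φ).1 (h _),
    fun h p => (los_sentence p.forest p.prime φ).2 h⟩⟩

end PosLogic
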